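/- Fix c > 0. For every ε > 0 there exists n₀ such that for all n ≥ n₀, all integers k with 1 ≤ k ≤ c log n, and all integers k₁, k₂ with 0 ≤ k₁ ≤ k and 0 ≤ k₂ ≤ k, one has | (1/(k log n)) · log( [n!/((k−k₁)!·k₁!·(k−k₁)!·(n−2k+k₁)!)] · [n!/((k−k₂)!·k₂!·(k−k₂)!·(n−2k+k₂)!)] ) − (4 − k₁/k − k₂/k) | ≤ ε. -/

import Mathlib

open Filter

noncomputable section

lemma key_factor (n k k₁ : ℕ) (hk : 1 ≤ k) (hk₁ : k₁ ≤ k) (hn : 4 * k ≤ n) :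
    |Real.log ((n.factorial : ℝ) /
        ((k - k₁).factorial * k₁.factorial * (k - k₁).factorial *
          (n + k₁ - 2 * k).factorial))
      - (2 * (k : ℝ) - k₁) * Real.log n| ≤ 2 * k * (Real.log 2 + Real.log k) := by
  set m : ℕ := 2 * k - k₁ with hm
  have hmn : m ≤ n := by omega
  have hidx : n + k₁ - 2 * k = n - m := by omega
  have hnm_pos : 0 < n - m := by omega
  set D : ℕ := (k - k₁).factorial * k₁.factorial * (k - k₁).factorial with hD
  have hDpos : 0 < D :=
    Nat.mul_pos (Nat.mul_pos (Nat.factorial_pos _) (Nat.factorial_pos _)) (Nat.factorial_pos _)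
  have hdesc_pos : 0 < n.descFactorial m := by
    rcases Nat.eq_zero_or_pos (n.descFactorial m) with h | h
    · exact absurd (Nat.descFactorial_eq_zero_iff_lt.mp h) (by omega)
    · exact h
  have hfac : (n - m).factorial * n.descFactorial m = n.factorial :=
    Nat.factorial_mul_descFactorial hmn
  have hT : (n.factorial : ℝ) /
      ((k - k₁).factorial * k₁.factorial * (k - k₁).factorial * (n + k₁ - 2 * k).factorial)
      = (n.descFactorial m : ℝ) / D := by
    rw [hidx, ← hfac, hD]
    push_cast
    have h1 : ((n - m).factorial : ℝ) ≠ 0 := by positivity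
    have h2 : ((k - k₁).factorial : ℝ) ≠ 0 := by positivity
    have h3 : (k₁.factorial : ℝ) ≠ 0 := by positivity
    field_simp
  rw [hT]
  have hDne : (D : ℝ) ≠ 0 := by positivity
  have hdescne : ((n.descFactorial m : ℕ) : ℝ) ≠ 0 := by
    exact_mod_cast Nat.pos_iff_ne_zero.mp hdesc_pos
  rw [Real.log_div hdescne hDne]
  have hnpos : (0:ℝ) < n := by
    have : 0 < n := by omega
    exact_mod_cast this
  have hnmpos : (0:ℝ) < ((n - m : ℕ) : ℝ) := by exact_mod_cast hnm_pos
  have hmcast : (2 * (k:ℝ) - k₁) = (m : ℝ) := by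
    rw [hm]
    have : (((2 * k - k₁ : ℕ)) : ℝ) = 2 * (k:ℝ) - k₁ := by
      push_cast [Nat.cast_sub (show k₁ ≤ 2 * k by omega)]; ring
    rw [this]
  rw [hmcast]
  have hub : Real.log (n.descFactorial m) ≤ m * Real.log n := by
    calc Real.log (n.descFactorial m) ≤ Real.log ((n:ℝ) ^ m) := by
          apply Real.log_le_log (by exact_mod_cast hdesc_pos)
          exact_mod_cast Nat.descFactorial_le_pow n m
      _ = m * Real.log n := Real.log_pow (n:ℝ) m
  have hlb : (m:ℝ) * Real.log ((n - m : ℕ) : ℝ) ≤ Real.log (n.descFactorial m) := by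
    have h2 : (n - m) ^ m ≤ n.descFactorial m :=
      le_trans (Nat.pow_le_pow_left (by omega) m) (Nat.pow_sub_le_descFactorial n m)
    calc (m:ℝ) * Real.log ((n - m : ℕ) : ℝ) = Real.log (((n-m:ℕ):ℝ) ^ m) :=
          (Real.log_pow _ m).symm
      _ ≤ Real.log (n.descFactorial m) := by
          apply Real.log_le_log (by positivity)
          exact_mod_cast h2
  have hDlb : 0 ≤ Real.log D := Real.log_nonneg (by exact_mod_cast hDpos)
  have hDub : Real.log D ≤ 2 * k * Real.log k := by
    have h1 : D ≤ k.factorial * k.factorial := by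
      have hd : k₁.factorial * (k - k₁).factorial ≤ k.factorial :=
        Nat.le_of_dvd k.factorial_pos (Nat.factorial_mul_factorial_dvd_factorial hk₁)
      calc D = (k₁.factorial * (k - k₁).factorial) * (k - k₁).factorial := by rw [hD]; ring
        _ ≤ k.factorial * k.factorial :=
          Nat.mul_le_mul hd (Nat.factorial_le (Nat.sub_le k k₁))
    have h2 : D ≤ k ^ (2 * k) := by
      calc D ≤ k.factorial * k.factorial := h1
        _ ≤ k ^ k * k ^ k := Nat.mul_le_mul (Nat.factorial_le_pow k) (Nat.factorial_le_pow k)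
        _ = k ^ (2 * k) := by rw [← pow_add]; ring_nf
    calc Real.log D ≤ Real.log ((k:ℝ) ^ (2*k)) := by
          apply Real.log_le_log (by exact_mod_cast hDpos)
          exact_mod_cast h2
      _ = (2*k : ℕ) * Real.log k := Real.log_pow (k:ℝ) (2*k)
      _ = 2 * k * Real.log k := by push_cast; ring
  have hlog2 : Real.log n - Real.log ((n-m:ℕ):ℝ) ≤ Real.log 2 := by
    have hle : (n:ℝ) ≤ 2 * ((n - m : ℕ):ℝ) := by
      exact_mod_cast (show n ≤ 2 * (n - m) by omega)
    have := Real.log_le_log hnpos hle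
    rw [Real.log_mul two_ne_zero (ne_of_gt hnmpos)] at this
    linarith
  have hmk : (m:ℝ) ≤ 2 * k := by exact_mod_cast (show m ≤ 2 * k by omega)
  have hm0 : (0:ℝ) ≤ m := by positivity
  have hlogk : 0 ≤ Real.log k := Real.log_nonneg (by exact_mod_cast hk)
  have hlog2' : 0 ≤ Real.log 2 := Real.log_nonneg (by norm_num)
  have hlognm : 0 ≤ Real.log ((n-m:ℕ):ℝ) := Real.log_nonneg (by exact_mod_cast hnm_pos)
  rw [abs_le]
  constructor
  · nlinarith [mul_le_mul_of_nonneg_left hlog2 hm0]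
  · nlinarith

/-- **Multinomial counting asymptotics.** Fix `c > 0`. For every `ε > 0` there is `n₀`
such that for all `n ≥ n₀`, all `k` with `1 ≤ k ≤ c log n` and all `k₁, k₂ ≤ k`,
`| (1/(k log n)) · log( [n!/((k−k₁)!·k₁!·(k−k₁)!·(n−2k+k₁)!)] ·
[n!/((k−k₂)!·k₂!·(k−k₂)!·(n−2k+k₂)!)] ) − (4 − k₁/k − k₂/k) | ≤ ε`. -/
theorem multinomial_pair_count_asymptotics (c : ℝ) (hc : 0 < c) :
    ∀ ε : ℝ, 0 < ε → ∃ n₀ : ℕ, ∀ n : ℕ, n₀ ≤ n → ∀ k k₁ k₂ : ℕ,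
      1 ≤ k → (k : ℝ) ≤ c * Real.log n → k₁ ≤ k → k₂ ≤ k →
      |Real.log
            (((n.factorial : ℝ) /
                ((k - k₁).factorial * k₁.factorial * (k - k₁).factorial *
                  (n + k₁ - 2 * k).factorial)) *
              ((n.factorial : ℝ) /
                ((k - k₂).factorial * k₂.factorial * (k - k₂).factorial *
                  (n + k₂ - 2 * k).factorial)))
            / ((k : ℝ) * Real.log n)
          - (4 - (k₁ : ℝ) / k - (k₂ : ℝ) / k)| ≤ ε := by
  intro ε hε
  have hlogto : Tendsto (fun n : ℕ => Real.log n) atTop atTop :=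
    Real.tendsto_log_atTop.comp tendsto_natCast_atTop_atTop
  have hdiv : Tendsto (fun x : ℝ => Real.log x / x) atTop (nhds 0) := by
    have := Real.isLittleO_log_id_atTop.tendsto_div_nhds_zero
    simpa using this
  -- eventual fact A : 4 c log n ≤ n
  have evA : ∀ᶠ n : ℕ in atTop, 4 * c * Real.log n ≤ n := by
    have h1 : Tendsto (fun n : ℕ => 4 * c * (Real.log n / n)) atTop (nhds 0) := by
      have := ((hdiv.comp tendsto_natCast_atTop_atTop).const_mul (4*c))
      simpa [Function.comp] using this
    filter_upwards [h1.eventually_le_const (show (0:ℝ) < 1 by norm_num),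
      eventually_ge_atTop 1] with n hn1 hn2
    have hnpos : (0:ℝ) < n := by exact_mod_cast hn2
    have : 4 * c * (Real.log n / n) * n ≤ 1 * n :=
      mul_le_mul_of_nonneg_right hn1 hnpos.le
    calc 4 * c * Real.log n = 4 * c * (Real.log n / n) * n := by field_simp
      _ ≤ 1 * n := this
      _ = n := one_mul _
  -- eventual fact B : 1 ≤ log n
  have evB : ∀ᶠ n : ℕ in atTop, 1 ≤ Real.log n := hlogto.eventually_ge_atTop 1
  -- eventual fact C
  have evC : ∀ᶠ n : ℕ in atTop,
      (2 * Real.log 2 + 2 * Real.log (c * Real.log n)) / Real.log n ≤ ε / 2 := by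
    have t1 : Tendsto (fun y : ℝ => (2 * Real.log 2 + 2 * Real.log (c * y)) / y)
        atTop (nhds 0) := by
      have e1 : (fun y : ℝ => (2 * Real.log 2 + 2 * Real.log c) / y + 2 * (Real.log y / y))
          =ᶠ[atTop] (fun y : ℝ => (2 * Real.log 2 + 2 * Real.log (c * y)) / y) := by
        filter_upwards [eventually_gt_atTop (0:ℝ)] with y hy
        rw [Real.log_mul (ne_of_gt hc) (ne_of_gt hy)]
        ring
      have t0 : Tendsto (fun y : ℝ =>
          (2 * Real.log 2 + 2 * Real.log c) / y + 2 * (Real.log y / y)) atTop (nhds 0) := by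
        have a : Tendsto (fun y : ℝ => (2 * Real.log 2 + 2 * Real.log c) / y) atTop (nhds 0) :=
          tendsto_const_nhds.div_atTop tendsto_id
        have b := hdiv.const_mul 2
        simpa using a.add b
      exact Tendsto.congr' e1 t0
    have t2 := t1.comp hlogto
    have t3 : Tendsto (fun n : ℕ =>
        (2 * Real.log 2 + 2 * Real.log (c * Real.log n)) / Real.log n) atTop (nhds 0) := by
      exact t2
    exact t3.eventually_le_const (by linarith)
  obtain ⟨n₀, hn₀⟩ := eventually_atTop.mp ((evA.and evB).and evC)
  refine ⟨n₀, fun n hn k k₁ k₂ hk hkc hk₁ hk₂ => ?_⟩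
  obtain ⟨⟨hA, hB⟩, hC⟩ := hn₀ n hn
  have hlogn_pos : (0:ℝ) < Real.log n := lt_of_lt_of_le one_pos hB
  have hkpos : (0:ℝ) < k := by exact_mod_cast hk
  have h4k : 4 * k ≤ n := by
    have : ((4 * k : ℕ) : ℝ) ≤ (n:ℝ) := by
      push_cast
      nlinarith
    exact_mod_cast this
  have E1 := key_factor n k k₁ hk hk₁ h4k
  have E2 := key_factor n k k₂ hk hk₂ h4k
  set T₁ : ℝ := (n.factorial : ℝ) /
      ((k - k₁).factorial * k₁.factorial * (k - k₁).factorial * (n + k₁ - 2 * k).factorial)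
    with hT₁
  set T₂ : ℝ := (n.factorial : ℝ) /
      ((k - k₂).factorial * k₂.factorial * (k - k₂).factorial * (n + k₂ - 2 * k).factorial)
    with hT₂
  have hT₁pos : 0 < T₁ := by
    rw [hT₁]
    apply div_pos (by exact_mod_cast n.factorial_pos)
    have a1 : (0:ℝ) < ((k - k₁).factorial : ℝ) := by exact_mod_cast (k - k₁).factorial_pos
    have a2 : (0:ℝ) < (k₁.factorial : ℝ) := by exact_mod_cast k₁.factorial_pos
    have a3 : (0:ℝ) < ((n + k₁ - 2 * k).factorial : ℝ) := by
      exact_mod_cast (n + k₁ - 2 * k).factorial_pos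
    positivity
  have hT₂pos : 0 < T₂ := by
    rw [hT₂]
    apply div_pos (by exact_mod_cast n.factorial_pos)
    have a1 : (0:ℝ) < ((k - k₂).factorial : ℝ) := by exact_mod_cast (k - k₂).factorial_pos
    have a2 : (0:ℝ) < (k₂.factorial : ℝ) := by exact_mod_cast k₂.factorial_pos
    have a3 : (0:ℝ) < ((n + k₂ - 2 * k).factorial : ℝ) := by
      exact_mod_cast (n + k₂ - 2 * k).factorial_pos
    positivity
  have hkl : (0:ℝ) < (k:ℝ) * Real.log n := mul_pos hkpos hlogn_pos
  have hlogmul : Real.log (T₁ * T₂) = Real.log T₁ + Real.log T₂ :=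
    Real.log_mul (ne_of_gt hT₁pos) (ne_of_gt hT₂pos)
  have hper : 2 * (k:ℝ) * (Real.log 2 + Real.log k) ≤ (ε/2) * ((k:ℝ) * Real.log n) := by
    have hlogk_le : Real.log k ≤ Real.log (c * Real.log n) := Real.log_le_log hkpos hkc
    have hC' : 2 * Real.log 2 + 2 * Real.log (c * Real.log n) ≤ (ε/2) * Real.log n :=
      (div_le_iff₀ hlogn_pos).mp hC
    nlinarith
  have hrw : Real.log (T₁ * T₂) / ((k:ℝ) * Real.log n) - (4 - (k₁:ℝ)/k - (k₂:ℝ)/k)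
      = ((Real.log T₁ - (2 * (k:ℝ) - k₁) * Real.log n)
        + (Real.log T₂ - (2 * (k:ℝ) - k₂) * Real.log n)) / ((k:ℝ) * Real.log n) := by
    rw [hlogmul]
    field_simp
    ring
  rw [hrw, abs_div, abs_of_pos hkl, div_le_iff₀ hkl]
  calc |(Real.log T₁ - (2 * (k:ℝ) - k₁) * Real.log n)
        + (Real.log T₂ - (2 * (k:ℝ) - k₂) * Real.log n)|
      ≤ |Real.log T₁ - (2 * (k:ℝ) - k₁) * Real.log n|
        + |Real.log T₂ - (2 * (k:ℝ) - k₂) * Real.log n| := abs_add_le _ _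
    _ ≤ 2 * k * (Real.log 2 + Real.log k) + 2 * k * (Real.log 2 + Real.log k) := by
        exact add_le_add E1 E2
    _ ≤ ε * ((k:ℝ) * Real.log n) := by linarith
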